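/- Let ρ be a normalized proximate order function with limit ρ₀ > 0, φ the inverse of r ↦ r^{ρ(r)}, and let f(z) = Σ_{ℓ≥0} a_ℓ·z^ℓ be an entire function on ℂ with σ ≥ 0. If for every ε > 0 there exists D_ε > 0 such that |f(z)| ≤ D_ε·exp((σ+ε)·|z|^{ρ(|z|)}) for all z, then limsup_{ℓ→∞} |a_ℓ|^{1/ℓ}·φ(ℓ) ≤ (e·ρ₀·σ)^{1/ρ₀}. -/

import Mathlib

open Filter Real



/-- Cauchy coefficient estimate for entire functions given by an everywhere-convergent
power series. -/
lemma my_cauchy_bound (f : ℂ → ℂ) (a : ℕ → ℂ)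
    (hsum : ∀ z : ℂ, HasSum (fun ℓ : ℕ => a ℓ * z ^ ℓ) (f z))
    {r : ℝ} (hr : 0 < r) {C : ℝ}
    (hC : ∀ θ : ℝ, ‖f (circleMap 0 r θ)‖ ≤ C) (n : ℕ) :
    ‖a n‖ * r ^ n ≤ C := by
  set p := FormalMultilinearSeries.ofScalars ℂ a with hp_def
  have hnorm : ∀ n, ‖p n‖ = ‖a n‖ := fun n =>
    FormalMultilinearSeries.ofScalars_norm ℂ a n
  have hrad : p.radius = ⊤ := by
    apply p.radius_eq_top_of_summable_norm
    intro s
    have := (hsum (s : ℂ)).summable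
    have habs : Summable fun n => ‖a n * (s : ℂ) ^ n‖ := by
      rwa [summable_norm_iff]
    refine habs.congr fun n => ?_
    rw [hnorm]
    simp [abs_of_nonneg s.coe_nonneg]
  have hp : HasFPowerSeriesOnBall f p 0 ⊤ := by
    refine ⟨by rw [hrad], ENNReal.zero_lt_top, ?_⟩
    intro y _
    have := hsum y
    simp only [zero_add]
    refine this.congr_fun fun n => ?_
    simp [hp_def, FormalMultilinearSeries.ofScalars, smul_eq_mul]
  have hdiff : Differentiable ℂ f := by
    intro z
    have : z ∈ Metric.eball (0 : ℂ) ⊤ := by simp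
    exact (hp.analyticAt_of_mem this).differentiableAt
  set R : NNReal := r.toNNReal with hR_def
  have hR : 0 < R := by simp [hR_def, Real.toNNReal_pos, hr]
  have hq : HasFPowerSeriesOnBall f (cauchyPowerSeries f 0 R) 0 ⊤ :=
    hdiff.hasFPowerSeriesOnBall 0 hR
  have hpq : p = cauchyPowerSeries f 0 R :=
    hp.hasFPowerSeriesAt.eq_formalMultilinearSeries hq.hasFPowerSeriesAt
  have hRr : (R : ℝ) = r := Real.coe_toNNReal r hr.le
  have hCnn : 0 ≤ C := le_trans (norm_nonneg _) (hC 0)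
  have hle := norm_cauchyPowerSeries_le f 0 (R : ℝ) n
  have hint : IntervalIntegrable (fun θ : ℝ => ‖f (circleMap 0 (R:ℝ) θ)‖)
      MeasureTheory.volume 0 (2 * π) :=
    (hdiff.continuous.norm.comp (continuous_circleMap 0 (R:ℝ))).intervalIntegrable _ _
  have hIle : (∫ θ : ℝ in (0)..2 * π, ‖f (circleMap 0 (R:ℝ) θ)‖) ≤ 2 * π * C := by
    have := intervalIntegral.integral_mono_on (by positivity : (0:ℝ) ≤ 2*π) hint
      (intervalIntegrable_const (c := C)) (fun θ _ => by rw [hRr]; exact hC θ)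
    simpa [mul_comm] using this
  rw [hRr] at hIle
  have key : ‖a n‖ ≤ C * (r⁻¹) ^ n := by
    calc ‖a n‖ = ‖p n‖ := (hnorm n).symm
    _ = ‖cauchyPowerSeries f 0 (R:ℝ) n‖ := by rw [hpq]
    _ ≤ ((2 * π)⁻¹ * ∫ θ : ℝ in (0)..2 * π, ‖f (circleMap 0 (R:ℝ) θ)‖) * |(R:ℝ)|⁻¹ ^ n :=
        norm_cauchyPowerSeries_le f 0 (R:ℝ) n
    _ ≤ C * (r⁻¹) ^ n := by
        rw [hRr, abs_of_nonneg hr.le]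
        gcongr ?_ * _
        rw [inv_mul_le_iff₀ (by positivity)]
        linarith [hIle]
  calc ‖a n‖ * r ^ n ≤ (C * (r⁻¹)^n) * r ^ n := by
        have : ‖a n‖ = ‖a n‖ := rfl
        rw [this]
        exact mul_le_mul_of_nonneg_right key (by positivity)
  _ = C := by rw [inv_pow, mul_assoc, inv_mul_cancel₀ (by positivity), mul_one]



lemma my_rv (ρ : ℝ → ℝ) (ρ₀ : ℝ) (hρ₀ : 0 < ρ₀)
    (hdiff : Differentiable ℝ ρ)
    (hlim : Filter.Tendsto ρ Filter.atTop (nhds ρ₀))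
    (hder : Filter.Tendsto (fun r => deriv ρ r * r * Real.log r) Filter.atTop (nhds 0))
    {c l : ℝ} (hc : 0 < c) (hl : 0 < l) (hcl : c < l ^ ρ₀) :
    ∀ᶠ r : ℝ in atTop, c * r ^ ρ r < (l * r) ^ ρ (l * r) := by
  have hlogs : Real.log c < ρ₀ * Real.log l := by
    have := Real.log_lt_log hc hcl
    rwa [Real.log_rpow hl] at this
  set η : ℝ := ρ₀ * Real.log l - Real.log c with hη_def
  have hη : 0 < η := by simp [hη_def]; linarith
  set η' : ℝ := η / (2 * (|Real.log l| + 1)) with hη'_def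
  have hη' : 0 < η' := by positivity
  set k : ℝ → ℝ := fun u => ρ (Real.exp u) * u - ρ₀ * u with hk_def
  set k' : ℝ → ℝ := fun u => deriv ρ (Real.exp u) * Real.exp u * u + ρ (Real.exp u) - ρ₀
    with hk'_def
  have hk : ∀ u, HasDerivAt k (k' u) u := by
    intro u
    have h1 : HasDerivAt (fun u => ρ (Real.exp u)) (deriv ρ (Real.exp u) * Real.exp u) u :=
      ((hdiff (Real.exp u)).hasDerivAt).comp u (Real.hasDerivAt_exp u)
    have h2 := (h1.mul (hasDerivAt_id u)).sub ((hasDerivAt_id u).const_mul ρ₀)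
    convert h2 using 1
    · rfl
    show deriv ρ (Real.exp u) * Real.exp u * u + ρ (Real.exp u) - ρ₀ = deriv ρ (Real.exp u) * Real.exp u * u + ρ (Real.exp u) * 1 - ρ₀ * 1
    ring
    all_goals rfl
  have hk'0 : Tendsto k' atTop (nhds 0) := by
    have h1 : Tendsto (fun u => deriv ρ (Real.exp u) * Real.exp u * u) atTop (nhds 0) := by
      have := hder.comp Real.tendsto_exp_atTop
      refine this.congr fun u => ?_
      simp [Real.log_exp]
    have h2 : Tendsto (fun u => ρ (Real.exp u) - ρ₀) atTop (nhds 0) := by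
      have := (hlim.comp Real.tendsto_exp_atTop).sub_const ρ₀
      simpa using this
    have := h1.add h2
    simp only [add_zero] at this
    refine this.congr fun u => ?_
    simp [hk'_def]; ring
  obtain ⟨u₀, hu₀⟩ : ∃ u₀, ∀ u ≥ u₀, |k' u| ≤ η' := by
    have := (hk'0.eventually (Metric.ball_mem_nhds (0:ℝ) hη')).and (eventually_ge_atTop 0)
    rw [eventually_atTop] at this
    obtain ⟨u₀, h⟩ := this
    exact ⟨u₀, fun u hu => by
      have := (h u hu).1
      rw [Real.dist_eq, sub_zero] at this
      exact this.le⟩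
  have mvt : ∀ u ∈ Set.Ici u₀, ∀ v ∈ Set.Ici u₀, |k v - k u| ≤ η' * |v - u| := by
    intro u hu v hv
    have := (convex_Ici u₀).norm_image_sub_le_of_norm_hasDerivWithin_le
      (f := k) (f' := k') (fun x hx => (hk x).hasDerivWithinAt)
      (fun x hx => by simpa using hu₀ x hx) hu hv
    simpa [Real.norm_eq_abs] using this
  have hev : ∀ᶠ r : ℝ in atTop, 0 < r ∧ u₀ ≤ Real.log r ∧ u₀ ≤ Real.log (l * r) := by
    have h1 : ∀ᶠ r : ℝ in atTop, u₀ ≤ Real.log r :=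
      Real.tendsto_log_atTop.eventually_ge_atTop u₀
    have h2 : ∀ᶠ r : ℝ in atTop, u₀ ≤ Real.log (l * r) := by
      have : Tendsto (fun r : ℝ => l * r) atTop atTop :=
        Tendsto.const_mul_atTop hl tendsto_id
      exact (Real.tendsto_log_atTop.comp this).eventually_ge_atTop u₀
    filter_upwards [h1, h2, eventually_gt_atTop 0] with r ha hb hcpos
    exact ⟨hcpos, ha, hb⟩
  filter_upwards [hev] with r ⟨hr, hur, hulr⟩
  have hlr : 0 < l * r := by positivity
  set u : ℝ := Real.log r with hu_def
  set v : ℝ := Real.log (l * r) with hv_def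
  have hvu : v - u = Real.log l := by
    rw [hv_def, hu_def, Real.log_mul hl.ne' hr.ne']; ring
  have hmvt := mvt u hur v hulr
  rw [hvu] at hmvt
  have hbound : η' * |Real.log l| ≤ η / 2 := by
    rw [hη'_def]
    rw [div_mul_eq_mul_div, div_le_div_iff₀ (by positivity) (by norm_num)]
    have h1 : |Real.log l| ≤ |Real.log l| + 1 := by linarith
    nlinarith [abs_nonneg (Real.log l), hη.le]
  have hkey : ρ (l * r) * v - ρ₀ * v - (ρ (r) * u - ρ₀ * u) ≥ -(η/2) := by
    have : |k v - k u| ≤ η / 2 := hmvt.trans hbound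
    have h := abs_le.mp this
    have : k v - k u ≥ -(η/2) := h.1
    have e1 : Real.exp u = r := Real.exp_log hr
    have e2 : Real.exp v = l * r := Real.exp_log hlr
    simpa [hk_def, e1, e2] using this
  have hfinal : ρ (l * r) * v > ρ (r) * u + Real.log c := by
    have hv_eq : v = u + Real.log l := by linarith [hvu]
    have : ρ (l * r) * v ≥ ρ r * u + ρ₀ * (v - u) - η/2 := by nlinarith [hkey]
    rw [hvu] at this
    have : ρ r * u + ρ₀ * Real.log l - η/2 > ρ r * u + Real.log c := by
      simp only [hη_def] at hη ⊢; linarith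
    linarith [hkey, this]
  calc c * r ^ ρ r = Real.exp (Real.log c + ρ r * u) := by
        rw [Real.exp_add, Real.exp_log hc, Real.rpow_def_of_pos hr]
        rw [hu_def, mul_comm (Real.log r)]
  _ < Real.exp (ρ (l * r) * v) := by
        apply Real.exp_lt_exp.mpr; linarith [hfinal]
  _ = (l * r) ^ ρ (l * r) := by rw [Real.rpow_def_of_pos hlr, mul_comm]




/-- Growth bound implies coefficient bound: (1) ⇒ (3) of Theorem 3.9, complex version. -/
theorem stmt_10 (ρ : ℝ → ℝ) (ρ₀ : ℝ) (hρ₀ : 0 < ρ₀)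
    (hdiff : Differentiable ℝ ρ)
    (hpos : ∀ r, 0 ≤ r → 0 ≤ ρ r)
    (hlim : Filter.Tendsto ρ Filter.atTop (nhds ρ₀))
    (hder : Filter.Tendsto (fun r => deriv ρ r * r * Real.log r) Filter.atTop (nhds 0))
    (hmono : StrictMonoOn (fun r => r ^ ρ r) (Set.Ioi (0:ℝ)))
    (hzero : Filter.Tendsto (fun r => r ^ ρ r) (nhdsWithin 0 (Set.Ioi 0)) (nhds 0))
    (φ : ℝ → ℝ) (hφpos : ∀ t, 0 < t → 0 < φ t)
    (hφ : ∀ r, 0 < r → φ (r ^ ρ r) = r)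
    (hφp : ∀ t, 0 < t → (φ t) ^ ρ (φ t) = t)
    (f : ℂ → ℂ) (a : ℕ → ℂ)
    (hsum : ∀ z : ℂ, HasSum (fun ℓ : ℕ => a ℓ * z ^ ℓ) (f z))
    (σ : ℝ) (hσ : 0 ≤ σ)
    (hbound : ∀ ε > (0:ℝ), ∃ D > (0:ℝ), ∀ z : ℂ,
      ‖f z‖ ≤ D * Real.exp ((σ + ε) * ‖z‖ ^ ρ ‖z‖)) :
    Filter.limsup
        (fun ℓ : ℕ => ‖a ℓ‖ ^ (1 / (ℓ : ℝ)) * φ (ℓ : ℝ)) Filter.atTop ≤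
      (Real.exp 1 * ρ₀ * σ) ^ (1 / ρ₀) := by
  set u : ℕ → ℝ := fun ℓ => ‖a ℓ‖ ^ (1 / (ℓ : ℝ)) * φ (ℓ : ℝ) with hu_def
  -- φ tends to infinity
  have hφtop : Tendsto φ atTop atTop := by
    rw [tendsto_atTop]
    intro M
    set M' : ℝ := max M 1 with hM'_def
    have hM' : 0 < M' := lt_of_lt_of_le one_pos (le_max_right _ _)
    have hVM' : 0 < M' ^ ρ M' := Real.rpow_pos_of_pos hM' _
    filter_upwards [eventually_ge_atTop (M' ^ ρ M' + 1)] with t ht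
    have ht0 : 0 < t := by linarith
    by_contra hlt
    push_neg at hlt
    have hφt : 0 < φ t := hφpos t ht0
    have hφtM : φ t < M' := lt_of_lt_of_le hlt (le_max_left _ _)
    have := hmono (Set.mem_Ioi.mpr hφt) (Set.mem_Ioi.mpr hM') hφtM
    simp only at this
    rw [hφp t ht0] at this
    linarith
  -- coboundedness of u
  have hco : Filter.IsCoboundedUnder (· ≤ ·) Filter.atTop u := by
    apply Filter.IsBoundedUnder.isCoboundedUnder_le
    refine ⟨0, ?_⟩
    rw [Filter.eventually_map]
    filter_upwards [eventually_ge_atTop 1] with ℓ hℓ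
    have h1 : (0:ℝ) < (ℓ:ℝ) := by exact_mod_cast hℓ
    have h2 := hφpos _ h1
    have : (0:ℝ) ≤ u ℓ := by
      rw [hu_def]
      exact mul_nonneg (Real.rpow_nonneg (norm_nonneg _) _) h2.le
    exact this
  refine le_of_forall_gt_imp_ge_of_dense fun b hb => ?_
  refine Filter.limsup_le_of_le hco ?_
  -- choose ε
  obtain ⟨ε, hε, hgε⟩ : ∃ ε : ℝ, 0 < ε ∧ (Real.exp 1 * ρ₀ * (σ + ε)) ^ (1 / ρ₀) < b := by
    have hcont : Tendsto (fun ε : ℝ => (Real.exp 1 * ρ₀ * (σ + ε)) ^ (1 / ρ₀))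
        (nhdsWithin 0 (Set.Ioi 0)) (nhds ((Real.exp 1 * ρ₀ * σ) ^ (1 / ρ₀))) := by
      have h1 : ContinuousAt (fun x : ℝ => x ^ (1 / ρ₀)) (Real.exp 1 * ρ₀ * σ) :=
        Real.continuousAt_rpow_const _ _ (Or.inr (by positivity))
      have h2 : ContinuousAt (fun ε : ℝ => Real.exp 1 * ρ₀ * (σ + ε)) 0 := by fun_prop
      have h3 : ContinuousAt (fun ε : ℝ => (Real.exp 1 * ρ₀ * (σ + ε)) ^ (1 / ρ₀)) 0 := by
        have := ContinuousAt.comp (by simpa using h1) h2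
        simpa [Function.comp_def] using this
      have := h3.continuousWithinAt (s := Set.Ioi 0)
      simpa [ContinuousWithinAt] using this
    have hev := hcont.eventually_lt_const hb
    obtain ⟨ε, hε1, hε2⟩ := (hev.and self_mem_nhdsWithin).exists
    exact ⟨ε, hε2, hε1⟩
  set c : ℝ := (σ + ε) * ρ₀ with hc_def
  have hc : 0 < c := by positivity
  -- choose l
  have hkey : Real.exp (1/ρ₀) * c ^ (1/ρ₀) < b := by
    have : (Real.exp 1 * ρ₀ * (σ + ε)) ^ (1 / ρ₀)
        = Real.exp (1/ρ₀) * c ^ (1/ρ₀) := by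
      rw [hc_def]
      rw [show Real.exp 1 * ρ₀ * (σ + ε) = Real.exp 1 * ((σ + ε) * ρ₀) by ring]
      rw [Real.mul_rpow (by positivity) (by positivity), ← Real.exp_mul, one_mul]
    linarith [hgε, this ▸ hgε]
  have hexp : (0:ℝ) < Real.exp (1/ρ₀) := Real.exp_pos _
  have hc0 : 0 < c ^ (1/ρ₀) := Real.rpow_pos_of_pos hc _
  set l : ℝ := (c ^ (1/ρ₀) + b * (Real.exp (1/ρ₀))⁻¹) / 2 with hl_def
  have hcl' : c ^ (1/ρ₀) < b * (Real.exp (1/ρ₀))⁻¹ := by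
    rw [lt_mul_inv_iff₀ hexp, mul_comm]
    exact hkey
  have hl1 : c ^ (1/ρ₀) < l := by rw [hl_def]; linarith
  have hl2 : l < b * (Real.exp (1/ρ₀))⁻¹ := by rw [hl_def]; linarith
  have hl : 0 < l := lt_trans hc0 hl1
  have hcl : c < l ^ ρ₀ := by
    have : (c ^ (1/ρ₀)) ^ ρ₀ < l ^ ρ₀ :=
      Real.rpow_lt_rpow (by positivity) hl1 hρ₀
    rwa [← Real.rpow_mul hc.le, one_div_mul_cancel hρ₀.ne', Real.rpow_one] at this
  -- Cauchy bound
  obtain ⟨D, hD, hfb⟩ := hbound ε hε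
  have hcauchy : ∀ (n : ℕ) (r : ℝ), 0 < r →
      ‖a n‖ * r ^ n ≤ D * Real.exp ((σ + ε) * r ^ ρ r) := by
    intro n r hr
    apply my_cauchy_bound f a hsum hr _ n
    intro θ
    have := hfb (circleMap 0 r θ)
    rwa [norm_circleMap_zero, abs_of_nonneg hr.le] at this
  -- eventual bound
  have hrtop : Tendsto (fun ℓ : ℕ => φ ((ℓ:ℝ) / c)) atTop atTop :=
    hφtop.comp (tendsto_natCast_atTop_atTop.atTop_div_const hc)
  have hRV := hrtop.eventually (my_rv ρ ρ₀ hρ₀ hdiff hlim hder hc hl hcl)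
  have hD1 : Tendsto (fun ℓ : ℕ => D ^ (1/(ℓ:ℝ))) atTop (nhds 1) := by
    have h1 : Tendsto (fun ℓ : ℕ => Real.log D * (1/(ℓ:ℝ))) atTop (nhds 0) := by
      simpa using (tendsto_one_div_atTop_nhds_zero_nat).const_mul (Real.log D)
    have := (Real.continuous_exp.tendsto 0).comp h1
    simp only [Real.exp_zero] at this
    refine this.congr fun ℓ => ?_
    simp [Real.exp_mul, Real.exp_log hD]
  have hDev : ∀ᶠ ℓ : ℕ in atTop, D ^ (1/(ℓ:ℝ)) < b * (Real.exp (1/ρ₀) * l)⁻¹ := by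
    apply hD1.eventually_lt_const
    rw [lt_mul_inv_iff₀ (by positivity), one_mul]
    calc Real.exp (1/ρ₀) * l < Real.exp (1/ρ₀) * (b * (Real.exp (1/ρ₀))⁻¹) := by
          exact mul_lt_mul_of_pos_left hl2 hexp
    _ = b := by field_simp
  filter_upwards [hRV, hDev, eventually_ge_atTop 1] with ℓ hrv hDℓ hℓ1
  have hℓpos : (0:ℝ) < (ℓ:ℝ) := by exact_mod_cast hℓ1
  have htℓ : (0:ℝ) < (ℓ:ℝ)/c := by positivity
  set r : ℝ := φ ((ℓ:ℝ)/c) with hr_def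
  have hr : 0 < r := hφpos _ htℓ
  have hVr : r ^ ρ r = (ℓ:ℝ)/c := hφp _ htℓ
  -- from hrv : c * r ^ ρ r < (l*r) ^ ρ (l*r)
  have hVlr : (ℓ:ℝ) < (l * r) ^ ρ (l * r) := by
    have := hrv
    rw [hVr] at this
    calc (ℓ:ℝ) = c * ((ℓ:ℝ)/c) := by field_simp
    _ < (l * r) ^ ρ (l * r) := this
  have hφℓ : φ (ℓ:ℝ) < l * r := by
    by_contra hge
    push_neg at hge
    have hlr : 0 < l * r := by positivity
    have hφℓpos : 0 < φ (ℓ:ℝ) := hφpos _ hℓpos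
    have := hmono.monotoneOn (Set.mem_Ioi.mpr hlr) (Set.mem_Ioi.mpr hφℓpos) hge
    rw [hφp _ hℓpos] at this
    linarith
  -- Cauchy at r
  have hcau := hcauchy ℓ r hr
  rw [hVr] at hcau
  have hsimp : (σ + ε) * ((ℓ:ℝ)/c) = (ℓ:ℝ)/ρ₀ := by
    rw [hc_def]; field_simp
  rw [hsimp] at hcau
  have haℓ : ‖a ℓ‖ ≤ D * Real.exp ((ℓ:ℝ)/ρ₀) / r ^ ℓ := by
    rw [le_div_iff₀ (by positivity)]
    exact hcau
  have hroot : ‖a ℓ‖ ^ (1/(ℓ:ℝ))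
      ≤ D ^ (1/(ℓ:ℝ)) * Real.exp (1/ρ₀) / r := by
    have h1 := Real.rpow_le_rpow (norm_nonneg _) haℓ (by positivity : (0:ℝ) ≤ 1/(ℓ:ℝ))
    calc ‖a ℓ‖ ^ (1/(ℓ:ℝ))
        ≤ (D * Real.exp ((ℓ:ℝ)/ρ₀) / r ^ ℓ) ^ (1/(ℓ:ℝ)) := h1
    _ = D ^ (1/(ℓ:ℝ)) * Real.exp (1/ρ₀) / r := by
        rw [Real.div_rpow (by positivity) (by positivity),
          Real.mul_rpow hD.le (by positivity)]
        congr 1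
        · congr 1
          rw [← Real.exp_mul]
          congr 1
          field_simp
        · rw [← Real.rpow_natCast r ℓ, ← Real.rpow_mul hr.le,
            mul_one_div, div_self (by positivity : ((ℓ:ℝ)) ≠ 0), Real.rpow_one]
  -- assemble
  have hφℓpos : 0 < φ (ℓ:ℝ) := hφpos _ hℓpos
  have step1 : u ℓ ≤ (D ^ (1/(ℓ:ℝ)) * Real.exp (1/ρ₀) / r) * φ (ℓ:ℝ) := by
    rw [hu_def]
    exact mul_le_mul_of_nonneg_right hroot hφℓpos.le
  have step2 : (D ^ (1/(ℓ:ℝ)) * Real.exp (1/ρ₀) / r) * φ (ℓ:ℝ)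
      ≤ (D ^ (1/(ℓ:ℝ)) * Real.exp (1/ρ₀) / r) * (l * r) := by
    have hnn : 0 ≤ D ^ (1/(ℓ:ℝ)) * Real.exp (1/ρ₀) / r := by positivity
    exact mul_le_mul_of_nonneg_left hφℓ.le hnn
  have step3 : (D ^ (1/(ℓ:ℝ)) * Real.exp (1/ρ₀) / r) * (l * r)
      = D ^ (1/(ℓ:ℝ)) * (Real.exp (1/ρ₀) * l) := by
    field_simp
  have step4 : D ^ (1/(ℓ:ℝ)) * (Real.exp (1/ρ₀) * l) ≤ b := by
    have hpos' : 0 < Real.exp (1/ρ₀) * l := by positivity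
    calc D ^ (1/(ℓ:ℝ)) * (Real.exp (1/ρ₀) * l)
        ≤ (b * (Real.exp (1/ρ₀) * l)⁻¹) * (Real.exp (1/ρ₀) * l) :=
          mul_le_mul_of_nonneg_right hDℓ.le hpos'.le
    _ = b := by field_simp
  calc u ℓ ≤ (D ^ (1/(ℓ:ℝ)) * Real.exp (1/ρ₀) / r) * φ (ℓ:ℝ) := step1
  _ ≤ (D ^ (1/(ℓ:ℝ)) * Real.exp (1/ρ₀) / r) * (l * r) := step2
  _ = D ^ (1/(ℓ:ℝ)) * (Real.exp (1/ρ₀) * l) := step3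
  _ ≤ b := step4
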